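/- (Convergence of the adjacent-transposition Markov chain to the uniform distribution on linear extensions.) Let h be a partial order on a finite set V with |V| = n, and define the transition matrix P on the finite state space L[h] as follows: from state x, an index i is chosen uniformly from {1,…,n}; if i = n the chain stays at x; otherwise the entries in positions i and i+1 of x are swapped to form x', and the chain moves to x' if x' ∈ L[h] and stays at x otherwise. (So P_{x,x'} = (1/n)·|{i ∈ {1,…,n−1} : swapping positions i, i+1 of x gives x'}| for x' ≠ x, and P_{x,x} = 1 − ∑_{x' ≠ x} P_{x,x'}.) Then for all x, l ∈ L[h], the t-step transition probability (P^t)_{x,l} converges to 1/|L[h]| as t → ∞; i.e., the chain converges in distribution to the uniform distribution over L[h] from every starting state. -/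

import Mathlib

open Classical Filter

/-- A (strict) partial order on `V`: an irreflexive transitive binary relation. -/
def IsPartialOrderOn {V : Type*} (r : V → V → Prop) : Prop :=
  (∀ a, ¬ r a a) ∧ (∀ a b c, r a b → r b c → r a c)

/-- A linear extension of `r`, encoded as an enumeration `σ : Fin n ≃ V` of `V`
(the list `(σ 0, …, σ (n-1))`): for positions `a < b` it is not the case that
the entry at `b` beats the entry at `a`. -/
def IsLinextEnum {V : Type*} {n : ℕ} (r : V → V → Prop) (σ : Fin n ≃ V) : Prop :=
  ∀ a b : Fin n, a < b → ¬ r (σ b) (σ a)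

/-- Off-diagonal transition probability of the adjacent-transposition chain:
`(1/n)` times the number of positions `i ∈ {1,…,n−1}` such that swapping the entries
at positions `i`, `i+1` of `x` yields `y`. -/
noncomputable def offDiagProb {V : Type*} [Fintype V] {n : ℕ} (r : V → V → Prop)
    (x y : {σ : Fin n ≃ V // IsLinextEnum r σ}) : ℝ :=
  (1 / (n : ℝ)) * ((Finset.univ.filter (fun i : Fin n =>
    ∃ h : (i : ℕ) + 1 < n,
      (y : Fin n ≃ V) = (Equiv.swap i ⟨(i : ℕ) + 1, h⟩).trans (x : Fin n ≃ V))).card : ℝ)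

/-- The transition matrix `P` on the state space `L[h]`: from `x`, a position
`i ∈ {1,…,n}` is chosen uniformly; if `i = n` the chain stays put, otherwise the
entries at positions `i, i+1` are swapped and the move is accepted iff the result is
again a linear extension.  Off the diagonal `P_{x,y} = offDiagProb r x y`; on the
diagonal `P_{x,x} = 1 − ∑_{y ≠ x} P_{x,y}`. -/
noncomputable def transMatrix {V : Type*} [Fintype V] {n : ℕ} (r : V → V → Prop) :
    Matrix {σ : Fin n ≃ V // IsLinextEnum r σ} {σ : Fin n ≃ V // IsLinextEnum r σ} ℝ :=
  fun x y =>
    if x = y then 1 - ∑ z ∈ Finset.univ.erase x, offDiagProb r x z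
    else offDiagProb r x y

namespace ASC


set_option maxRecDepth 8000 in
lemma swap_lt {n : ℕ} {i j a b : Fin n} (hj : (j:ℕ) = (i:ℕ) + 1) (hab : a < b)
    (hne : ¬(a = i ∧ b = j)) : Equiv.swap i j a < Equiv.swap i j b := by
  simp only [Equiv.swap_apply_def]
  split_ifs <;> simp only [Fin.lt_def, Fin.ext_iff] at * <;> omega

lemma strictMono_of_adj {n : ℕ} {f : Fin n → Fin n}
    (h : ∀ i : Fin n, ∀ hi : (i:ℕ)+1 < n, f i < f ⟨(i:ℕ)+1, hi⟩) : StrictMono f := by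
  cases n with
  | zero => intro a; exact absurd a.2 (by omega)
  | succ m =>
    rw [Fin.strictMono_iff_lt_succ]
    intro i
    have hi : ((i.castSucc : Fin (m+1)):ℕ) + 1 < m + 1 := by
      simpa using i.2
    have := h i.castSucc hi
    exact this

lemma perm_eq_of_strictMono {n : ℕ} (π : Equiv.Perm (Fin n)) (h : StrictMono ⇑π) :
    ∀ a, π a = a := by
  intro a
  haveI : WellFoundedLT (Fin n) := inferInstance
  have h1 : a ≤ π a := h.le_apply
  have h2 : π a ≤ a := by
    have hs : StrictMono ⇑π.symm := by
      intro u v huv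
      rcases lt_trichotomy (π.symm u) (π.symm v) with hh | hh | hh
      · exact hh
      · exfalso; rw [← π.apply_symm_apply u, ← π.apply_symm_apply v, hh] at huv
        exact lt_irrefl _ huv
      · exfalso; have := h hh
        rw [π.apply_symm_apply, π.apply_symm_apply] at this
        exact absurd huv (not_lt.2 this.le)
    have h3 : (π a : Fin n) ≤ π.symm (π a) := hs.le_apply
    rwa [π.symm_apply_apply] at h3
  exact le_antisymm h2 h1


variable {V : Type*} [Fintype V] {n : ℕ} {r : V → V → Prop}
local notation "SS" => {σ : Fin n ≃ V // IsLinextEnum r σ}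

lemma offDiag_nonneg (x y : SS) : 0 ≤ offDiagProb r x y := by
  unfold offDiagProb; positivity

lemma offDiag_symm (x y : SS) : offDiagProb r x y = offDiagProb r y x := by
  unfold offDiagProb
  congr 2
  congr 1
  apply Finset.filter_congr
  intro i _
  constructor
  · rintro ⟨h, hy⟩
    refine ⟨h, ?_⟩
    rw [hy, ← Equiv.trans_assoc, Equiv.swap_swap, Equiv.refl_trans]
  · rintro ⟨h, hx⟩
    refine ⟨h, ?_⟩
    rw [hx, ← Equiv.trans_assoc, Equiv.swap_swap, Equiv.refl_trans]

lemma sum_offDiag_le (x : SS) :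
    ∑ z ∈ Finset.univ.erase x, offDiagProb r x z ≤ (1 / (n:ℝ)) * ((n:ℝ) - 1) := by
  rcases Nat.eq_zero_or_pos n with hn | hn
  · subst hn
    have : ∀ z ∈ Finset.univ.erase x, offDiagProb r x z = 0 := by
      intro z _
      unfold offDiagProb
      simp
    rw [Finset.sum_congr rfl this]
    simp
  · set A : SS → Finset (Fin n) := fun z => Finset.univ.filter (fun i : Fin n =>
      ∃ h : (i : ℕ) + 1 < n,
        (z : Fin n ≃ V) = (Equiv.swap i ⟨(i : ℕ) + 1, h⟩).trans (x : Fin n ≃ V)) with hA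
    have hsum : ∑ z ∈ Finset.univ.erase x, offDiagProb r x z
        = (1/(n:ℝ)) * ∑ z ∈ Finset.univ.erase x, ((A z).card : ℝ) := by
      rw [Finset.mul_sum]
      rfl
    rw [hsum]
    have hdisj : ∀ z ∈ Finset.univ.erase x, ∀ w ∈ Finset.univ.erase x, z ≠ w →
        Disjoint (A z) (A w) := by
      intro z _ w _ hzw
      rw [Finset.disjoint_left]
      intro i hiz hiw
      rw [hA] at hiz hiw
      simp only [Finset.mem_filter] at hiz hiw
      obtain ⟨_, h1, e1⟩ := hiz
      obtain ⟨_, h2, e2⟩ := hiw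
      exact hzw (Subtype.ext (e1.trans e2.symm))
    have hcard : ∑ z ∈ Finset.univ.erase x, (A z).card
        = ((Finset.univ.erase x).biUnion A).card :=
      (Finset.card_biUnion hdisj).symm
    have hsub : ((Finset.univ.erase x).biUnion A) ⊆
        Finset.univ.erase (⟨n-1, by omega⟩ : Fin n) := by
      intro i hi
      rw [Finset.mem_biUnion] at hi
      obtain ⟨z, _, hiz⟩ := hi
      rw [hA] at hiz
      simp only [Finset.mem_filter] at hiz
      obtain ⟨_, h1, _⟩ := hiz
      rw [Finset.mem_erase]
      exact ⟨by simp [Fin.ext_iff]; omega, Finset.mem_univ _⟩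
    have hle : (((Finset.univ.erase x).biUnion A).card : ℝ) ≤ (n : ℝ) - 1 := by
      have := Finset.card_le_card hsub
      rw [Finset.card_erase_of_mem (Finset.mem_univ _), Finset.card_univ, Fintype.card_fin] at this
      have : (((Finset.univ.erase x).biUnion A).card : ℝ) ≤ ((n - 1 : ℕ) : ℝ) := by
        exact_mod_cast this
      calc (((Finset.univ.erase x).biUnion A).card : ℝ) ≤ ((n-1 : ℕ) : ℝ) := this
        _ ≤ (n:ℝ) - 1 := by
            rw [Nat.cast_sub hn]; simp
    have h1n : 0 ≤ (1/(n:ℝ)) := by positivity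
    calc (1/(n:ℝ)) * ∑ z ∈ Finset.univ.erase x, ((A z).card : ℝ)
        = (1/(n:ℝ)) * (((Finset.univ.erase x).biUnion A).card : ℝ) := by
          rw [← Nat.cast_sum, hcard]
      _ ≤ (1/(n:ℝ)) * ((n:ℝ) - 1) := by
          apply mul_le_mul_of_nonneg_left hle h1n

lemma diag_ge (x : SS) : 1/((n:ℝ)+1) ≤ transMatrix r x x := by
  rw [transMatrix, if_pos rfl]
  have h := sum_offDiag_le (r := r) x
  rcases Nat.eq_zero_or_pos n with hn | hn
  · subst hn
    simp at h ⊢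
    linarith
  · have hn' : (1:ℝ) ≤ (n:ℝ) := by exact_mod_cast hn
    have : (1/(n:ℝ)) * ((n:ℝ) - 1) = 1 - 1/(n:ℝ) := by
      field_simp
    rw [this] at h
    have : 1/((n:ℝ)+1) ≤ 1/(n:ℝ) := by
      apply one_div_le_one_div_of_le <;> linarith
    linarith

lemma entry_nonneg (x y : SS) : 0 ≤ transMatrix r x y := by
  by_cases h : x = y
  · subst h
    have := diag_ge (r := r) x
    have h2 : (0:ℝ) ≤ 1/((n:ℝ)+1) := by positivity
    linarith
  · rw [transMatrix, if_neg h]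
    exact offDiag_nonneg x y

lemma row_sum (x : SS) : ∑ y, transMatrix r x y = 1 := by
  rw [← Finset.add_sum_erase _ _ (Finset.mem_univ x)]
  have : ∀ y ∈ Finset.univ.erase x, transMatrix r x y = offDiagProb r x y := by
    intro y hy
    rw [Finset.mem_erase] at hy
    rw [transMatrix, if_neg (Ne.symm hy.1)]
  rw [Finset.sum_congr rfl this, transMatrix, if_pos rfl]
  ring

lemma matrix_symm (x y : SS) : transMatrix r x y = transMatrix r y x := by
  by_cases h : x = y
  · subst h; rfl
  · rw [transMatrix, if_neg h, transMatrix, if_neg (Ne.symm h)]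
    exact offDiag_symm x y

lemma pow_row_sum (t : ℕ) (x : SS) : ∑ y, ((transMatrix r)^t) x y = 1 := by
  induction t generalizing x with
  | zero => simp [Matrix.one_apply]
  | succ t ih =>
    rw [pow_succ']
    simp only [Matrix.mul_apply]
    rw [Finset.sum_comm]
    calc ∑ z, ∑ y, transMatrix r x z * ((transMatrix r)^t) z y
        = ∑ z, transMatrix r x z * ∑ y, ((transMatrix r)^t) z y := by
          simp [Finset.mul_sum]
      _ = ∑ z, transMatrix r x z := by
          apply Finset.sum_congr rfl; intro z _; rw [ih z, mul_one]
      _ = 1 := row_sum x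

lemma pow_entry_nonneg (t : ℕ) (x y : SS) : 0 ≤ ((transMatrix r)^t) x y := by
  induction t generalizing x y with
  | zero => simp [Matrix.one_apply]; split_ifs <;> norm_num
  | succ t ih =>
    rw [pow_succ']
    rw [Matrix.mul_apply]
    apply Finset.sum_nonneg
    intro z _
    exact mul_nonneg (entry_nonneg x z) (ih z y)

lemma pow_col_sum (t : ℕ) (y : SS) : ∑ x, ((transMatrix r)^t) x y = 1 := by
  have hsym : ((transMatrix (n := n) r)^t).transpose = (transMatrix (n := n) r)^t := by
    rw [Matrix.transpose_pow]
    congr 1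
    ext a b
    rw [Matrix.transpose_apply]
    exact matrix_symm b a
  calc ∑ x, ((transMatrix r)^t) x y = ∑ x, ((transMatrix r)^t).transpose y x := by
        simp [Matrix.transpose_apply]
    _ = ∑ x, ((transMatrix r)^t) y x := by rw [hsym]
    _ = 1 := pow_row_sum t y




/-- the swapped enumeration is again a linear extension -/
lemma swap_linext (x y : SS) {i j : Fin n} (hj : (j:ℕ) = (i:ℕ)+1)
    (hinv : (x.1.trans y.1.symm) j < (x.1.trans y.1.symm) i) :
    IsLinextEnum r ((Equiv.swap i j).trans x.1) := by
  intro a b hab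
  simp only [Equiv.trans_apply]
  by_cases hcase : a = i ∧ b = j
  · obtain ⟨rfl, rfl⟩ := hcase
    rw [Equiv.swap_apply_left, Equiv.swap_apply_right]
    -- goal: ¬ r (x.1 a[=i]) (x.1 b[=j]) after swaps: swap a = j, swap b = i... careful
    -- swap i j a = j (a = i), swap i j b = i (b = j). goal ¬ r (x.1 i) (x.1 j)
    have := y.2 _ _ hinv
    simp only [Equiv.trans_apply] at this
    rwa [y.1.apply_symm_apply, y.1.apply_symm_apply] at this
  · exact x.2 _ _ (swap_lt hj hab hcase)

noncomputable def invCount (x y : SS) : ℕ :=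
  (Finset.univ.filter (fun p : Fin n × Fin n =>
    p.1 < p.2 ∧ (x.1.trans y.1.symm) p.2 < (x.1.trans y.1.symm) p.1)).card

lemma eq_of_invCount_zero {x y : SS} (h : invCount x y = 0) : x = y := by
  rw [invCount] at h
  set π := x.1.trans y.1.symm with hπ
  have hmono : StrictMono ⇑π := by
    intro a b hab
    have hnin : ¬ (π b < π a) := by
      intro hlt
      have : (a, b) ∈ Finset.univ.filter (fun p : Fin n × Fin n =>
          p.1 < p.2 ∧ π p.2 < π p.1) := by
        simp [hab, hlt]
      have := Finset.card_pos.2 ⟨_, this⟩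
      omega
    rcases lt_trichotomy (π a) (π b) with hh | hh | hh
    · exact hh
    · exact absurd (π.injective hh) (ne_of_lt hab)
    · exact absurd hh hnin
  have hid := perm_eq_of_strictMono π hmono
  apply Subtype.ext
  apply Equiv.ext
  intro a
  have := hid a
  simp only [hπ, Equiv.trans_apply] at this
  have := congrArg y.1 this
  rwa [y.1.apply_symm_apply] at this

lemma exists_adj_inv {x y : SS} (h : invCount x y ≠ 0) :
    ∃ (i : Fin n) (hi : (i:ℕ)+1 < n),
      (x.1.trans y.1.symm) ⟨(i:ℕ)+1, hi⟩ < (x.1.trans y.1.symm) i := by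
  set π := x.1.trans y.1.symm with hπ
  by_contra hcon
  push_neg at hcon
  have hmono : StrictMono ⇑π := by
    apply strictMono_of_adj
    intro i hi
    have hne : π i ≠ π ⟨(i:ℕ)+1, hi⟩ := by
      intro he
      have := π.injective he
      simp [Fin.ext_iff] at this
    exact lt_of_le_of_ne (hcon i hi) hne
  apply h
  rw [invCount]
  rw [Finset.card_eq_zero, Finset.filter_eq_empty_iff]
  intro p _
  rintro ⟨h1, h2⟩
  exact absurd (hmono h1) (not_lt.2 h2.le)

lemma invCount_swap_lt (x y : SS) {i j : Fin n} (hj : (j:ℕ) = (i:ℕ)+1)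
    (hinv : (x.1.trans y.1.symm) j < (x.1.trans y.1.symm) i)
    (x' : SS) (hx' : x'.1 = (Equiv.swap i j).trans x.1) :
    invCount x' y < invCount x y := by
  classical
  set π := x.1.trans y.1.symm with hπ
  have hij : i < j := by rw [Fin.lt_def]; omega
  have hπ' : ∀ a, (x'.1.trans y.1.symm) a = π (Equiv.swap i j a) := by
    intro a; simp [hx', hπ, Equiv.trans_apply]
  set Inv := Finset.univ.filter (fun p : Fin n × Fin n => p.1 < p.2 ∧ π p.2 < π p.1) with hInv
  set Inv' := Finset.univ.filter (fun p : Fin n × Fin n =>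
      p.1 < p.2 ∧ (x'.1.trans y.1.symm) p.2 < (x'.1.trans y.1.symm) p.1) with hInv'
  have hmem : (i, j) ∈ Inv := by
    simp [hInv, hij, hinv]
  have himg : Inv' = Finset.image
      (fun p : Fin n × Fin n => (Equiv.swap i j p.1, Equiv.swap i j p.2)) (Inv.erase (i, j)) := by
    ext q
    simp only [Finset.mem_image, Finset.mem_erase, hInv, hInv', Finset.mem_filter,
      Finset.mem_univ, true_and]
    constructor
    · rintro ⟨hq1, hq2⟩
      rw [hπ', hπ'] at hq2
      have hqne : q ≠ (i, j) := by
        rintro rfl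
        simp only [Equiv.swap_apply_left, Equiv.swap_apply_right] at hq2
        exact absurd hinv (not_lt.2 hq2.le)
      refine ⟨(Equiv.swap i j q.1, Equiv.swap i j q.2), ⟨?_, ?_, ?_⟩, ?_⟩
      · -- (swap q.1, swap q.2) ≠ (i,j)
        intro he
        rw [Prod.ext_iff] at he
        obtain ⟨h1, h2⟩ := he
        have : q.1 = j := by
          have := congrArg (Equiv.swap i j) h1
          rwa [Equiv.swap_apply_self, Equiv.swap_apply_left] at this
        have h2' : q.2 = i := by
          have := congrArg (Equiv.swap i j) h2
          rwa [Equiv.swap_apply_self, Equiv.swap_apply_right] at this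
        rw [this, h2'] at hq1
        exact absurd (hq1.trans hij) (lt_irrefl _)
      · -- swap q.1 < swap q.2
        apply swap_lt hj hq1
        intro he
        exact hqne (Prod.ext he.1 he.2)
      · exact hq2
      · simp [Equiv.swap_apply_self]
    · rintro ⟨p, ⟨hpne, hp1, hp2⟩, rfl⟩
      constructor
      · apply swap_lt hj hp1
        intro he
        exact hpne (Prod.ext he.1 he.2)
      · rw [hπ', hπ', Equiv.swap_apply_self, Equiv.swap_apply_self]
        exact hp2
  have hinj : Set.InjOn (fun p : Fin n × Fin n => (Equiv.swap i j p.1, Equiv.swap i j p.2))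
      (Inv.erase (i, j)) := by
    intro p _ q _ he
    simp only [Prod.ext_iff] at he
    exact Prod.ext ((Equiv.swap i j).injective he.1) ((Equiv.swap i j).injective he.2)
  have : invCount x' y = (Inv.erase (i,j)).card := by
    rw [invCount, ← hInv', himg, Finset.card_image_of_injOn hinj]
  rw [this, Finset.card_erase_of_mem hmem]
  have hpos : 0 < Inv.card := Finset.card_pos.2 ⟨_, hmem⟩
  rw [invCount, ← hInv]
  omega

lemma step_prob (x x' : SS) {i : Fin n} (hi : (i:ℕ)+1 < n)
    (hx' : x'.1 = (Equiv.swap i ⟨(i:ℕ)+1, hi⟩).trans x.1) :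
    0 < transMatrix r x x' := by
  have hne : x ≠ x' := by
    intro he
    rw [← he] at hx'
    have := congrArg (fun e : Fin n ≃ V => e i) hx'
    simp only [Equiv.trans_apply, Equiv.swap_apply_left] at this
    have := x.1.injective this.symm
    simp [Fin.ext_iff] at this
  rw [transMatrix, if_neg hne, offDiagProb]
  have hn : 0 < n := by omega
  have hmem : i ∈ Finset.univ.filter (fun i' : Fin n =>
      ∃ h : (i' : ℕ) + 1 < n,
        (x' : Fin n ≃ V) = (Equiv.swap i' ⟨(i' : ℕ) + 1, h⟩).trans (x : Fin n ≃ V)) := by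
    simp only [Finset.mem_filter, Finset.mem_univ, true_and]
    exact ⟨hi, hx'⟩
  have hcard : 0 < (Finset.univ.filter (fun i' : Fin n =>
      ∃ h : (i' : ℕ) + 1 < n,
        (x' : Fin n ≃ V) = (Equiv.swap i' ⟨(i' : ℕ) + 1, h⟩).trans (x : Fin n ≃ V))).card :=
    Finset.card_pos.2 ⟨_, hmem⟩
  have h1 : (0:ℝ) < 1/(n:ℝ) := by positivity
  have h2 : (0:ℝ) < ((Finset.univ.filter (fun i' : Fin n =>
      ∃ h : (i' : ℕ) + 1 < n,
        (x' : Fin n ≃ V) = (Equiv.swap i' ⟨(i' : ℕ) + 1, h⟩).trans (x : Fin n ≃ V))).card : ℝ) := by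
    exact_mod_cast hcard
  positivity

lemma reach (x y : SS) : ∃ t, 0 < ((transMatrix r)^t) x y := by
  generalize hd : invCount x y = d
  induction d using Nat.strong_induction_on generalizing x with
  | _ d IH =>
    rcases Nat.eq_zero_or_pos d with h0 | hpos
    · subst h0
      have := eq_of_invCount_zero hd
      subst this
      exact ⟨0, by simp [Matrix.one_apply]⟩
    · obtain ⟨i, hi, hinv⟩ := exists_adj_inv (x := x) (y := y) (by omega)
      set j : Fin n := ⟨(i:ℕ)+1, hi⟩ with hjdef
      have hj : (j:ℕ) = (i:ℕ)+1 := rfl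
      have hlin : IsLinextEnum r ((Equiv.swap i j).trans x.1) := swap_linext x y hj hinv
      set x' : SS := ⟨(Equiv.swap i j).trans x.1, hlin⟩ with hx'def
      have hx' : x'.1 = (Equiv.swap i j).trans x.1 := rfl
      have hdec := invCount_swap_lt x y hj hinv x' hx'
      rw [hd] at hdec
      obtain ⟨t, ht⟩ := IH (invCount x' y) hdec x' rfl
      refine ⟨t+1, ?_⟩
      rw [pow_succ', Matrix.mul_apply]
      apply Finset.sum_pos'
      · intro z _
        exact mul_nonneg (entry_nonneg x z) (pow_entry_nonneg t z y)
      · exact ⟨x', Finset.mem_univ _, mul_pos (step_prob x x' hi hx') ht⟩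

lemma pow_pos_succ {t : ℕ} {x y : SS} (h : 0 < ((transMatrix r)^t) x y) :
    0 < ((transMatrix r)^(t+1)) x y := by
  rw [pow_succ', Matrix.mul_apply]
  apply Finset.sum_pos'
  · intro z _
    exact mul_nonneg (entry_nonneg x z) (pow_entry_nonneg t z y)
  · refine ⟨x, Finset.mem_univ _, mul_pos ?_ h⟩
    have := diag_ge (r := r) x
    have h2 : (0:ℝ) < 1/((n:ℝ)+1) := by positivity
    linarith

lemma reach_ge (x y : SS) {t s : ℕ} (ht : 0 < ((transMatrix r)^t) x y) (hs : t ≤ s) :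
    0 < ((transMatrix r)^s) x y := by
  induction s with
  | zero =>
    have : t = 0 := by omega
    subst this; exact ht
  | succ s ih =>
    rcases Nat.lt_or_ge t (s+1) with h | h
    · exact pow_pos_succ (ih (by omega))
    · have : t = s + 1 := by omega
      subst this; exact ht


end ASC

/- **Statement 13.** -/

theorem adjacent_swap_chain_converges_to_uniform {V : Type*} [Fintype V] (n : ℕ)
    (hcard : Fintype.card V = n)
    (r : V → V → Prop) (hr : IsPartialOrderOn r)
    (x l : {σ : Fin n ≃ V // IsLinextEnum r σ}) :
    Tendsto (fun t : ℕ => ((transMatrix r) ^ t) x l) atTop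
      (nhds (1 / (Fintype.card {σ : Fin n ≃ V // IsLinextEnum r σ} : ℝ))) := by
  classical
  haveI hnemp : Nonempty {σ : Fin n ≃ V // IsLinextEnum r σ} := ⟨x⟩
  set P := transMatrix (n := n) r with hP
  set N := Fintype.card {σ : Fin n ≃ V // IsLinextEnum r σ} with hNdef
  have hN : 0 < N := Fintype.card_pos
  have hNR : (0:ℝ) < (N:ℝ) := by exact_mod_cast hN
  -- a time after which all entries are positive
  have hreach : ∀ a b : {σ : Fin n ≃ V // IsLinextEnum r σ}, ∃ t, ∀ s, t ≤ s → 0 < (P^s) a b := by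
    intro a b
    obtain ⟨t, ht⟩ := ASC.reach a b
    exact ⟨t, fun s hs => ASC.reach_ge a b ht hs⟩
  choose f hf using hreach
  set t0 := (Finset.univ : Finset ({σ : Fin n ≃ V // IsLinextEnum r σ} ×
      {σ : Fin n ≃ V // IsLinextEnum r σ})).sup (fun p => f p.1 p.2) + 1 with ht0def
  have ht0pos : 0 < t0 := Nat.succ_pos _
  have hpos : ∀ a b, 0 < (P^t0) a b := by
    intro a b
    have h1 : f a b ≤ (Finset.univ : Finset ({σ : Fin n ≃ V // IsLinextEnum r σ} ×
        {σ : Fin n ≃ V // IsLinextEnum r σ})).sup (fun p => f p.1 p.2) :=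
      by simpa using Finset.le_sup (f := fun p : ({σ : Fin n ≃ V // IsLinextEnum r σ} ×
        {σ : Fin n ≃ V // IsLinextEnum r σ}) => f p.1 p.2) (Finset.mem_univ (a,b))
    exact hf a b t0 (by omega)
  have hup : (Finset.univ : Finset ({σ : Fin n ≃ V // IsLinextEnum r σ} ×
      {σ : Fin n ≃ V // IsLinextEnum r σ})).Nonempty := Finset.univ_nonempty
  set ε := Finset.univ.inf' hup (fun p : {σ : Fin n ≃ V // IsLinextEnum r σ} ×
      {σ : Fin n ≃ V // IsLinextEnum r σ} => (P^t0) p.1 p.2) with hεdef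
  have hεpos : 0 < ε := (Finset.lt_inf'_iff hup).2 (fun p _ => hpos p.1 p.2)
  have hεle : ∀ a b, ε ≤ (P^t0) a b := fun a b => Finset.inf'_le _ (Finset.mem_univ (a,b))
  have hNε : (N:ℝ) * ε ≤ 1 := by
    calc (N:ℝ) * ε = ∑ _b : {σ : Fin n ≃ V // IsLinextEnum r σ}, ε := by
          rw [Finset.sum_const, Finset.card_univ, nsmul_eq_mul]
      _ ≤ ∑ b, (P^t0) x b := Finset.sum_le_sum (fun b _ => hεle x b)
      _ = 1 := ASC.pow_row_sum t0 x
  set c := 1 - (N:ℝ)*ε with hcdef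
  have hc0 : 0 ≤ c := by rw [hcdef]; linarith
  have hc1 : c < 1 := by
    rw [hcdef]
    have : 0 < (N:ℝ) * ε := mul_pos hNR hεpos
    linarith
  have hun : (Finset.univ : Finset {σ : Fin n ≃ V // IsLinextEnum r σ}).Nonempty :=
    Finset.univ_nonempty
  set M : ℕ → ℝ := fun t => Finset.univ.sup' hun (fun z => (P^t) z l) with hMdef
  set m : ℕ → ℝ := fun t => Finset.univ.inf' hun (fun z => (P^t) z l) with hmdef
  have hMz : ∀ t z, (P^t) z l ≤ M t := by
    intro t z
    simp only [hMdef]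
    exact Finset.le_sup' (fun z => (P^t) z l) (Finset.mem_univ z)
  have hmz : ∀ t z, m t ≤ (P^t) z l := by
    intro t z
    simp only [hmdef]
    exact Finset.inf'_le (fun z => (P^t) z l) (Finset.mem_univ z)
  have hMle : ∀ s t, M (s + t) ≤ M t := by
    intro s t
    apply Finset.sup'_le
    intro z _
    have he : (P^(s+t)) z l = ∑ y, (P^s) z y * (P^t) y l := by
      rw [pow_add, Matrix.mul_apply]
    calc (P^(s+t)) z l = ∑ y, (P^s) z y * (P^t) y l := he
      _ ≤ ∑ y, (P^s) z y * M t := by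
          apply Finset.sum_le_sum
          intro y _
          exact mul_le_mul_of_nonneg_left (hMz t y) (ASC.pow_entry_nonneg s z y)
      _ = M t := by rw [← Finset.sum_mul, ASC.pow_row_sum, one_mul]
  have hmge : ∀ s t, m t ≤ m (s + t) := by
    intro s t
    apply Finset.le_inf'
    intro z _
    have he : (P^(s+t)) z l = ∑ y, (P^s) z y * (P^t) y l := by
      rw [pow_add, Matrix.mul_apply]
    calc m t = ∑ y, (P^s) z y * m t := by rw [← Finset.sum_mul, ASC.pow_row_sum, one_mul]
      _ ≤ ∑ y, (P^s) z y * (P^t) y l := by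
          apply Finset.sum_le_sum
          intro y _
          exact mul_le_mul_of_nonneg_left (hmz t y) (ASC.pow_entry_nonneg s z y)
      _ = (P^(s+t)) z l := he.symm
  have hdecomp : ∀ t z, (P^(t0+t)) z l = (∑ y, ((P^t0) z y - ε) * (P^t) y l) + ε := by
    intro t z
    have hcol : ∑ y, (P^t) y l = 1 := ASC.pow_col_sum t l
    calc (P^(t0+t)) z l = ∑ y, (P^t0) z y * (P^t) y l := by rw [pow_add, Matrix.mul_apply]
      _ = (∑ y, ((P^t0) z y - ε) * (P^t) y l) + ε * ∑ y, (P^t) y l := by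
          rw [Finset.mul_sum, ← Finset.sum_add_distrib]
          apply Finset.sum_congr rfl
          intro y _
          ring
      _ = (∑ y, ((P^t0) z y - ε) * (P^t) y l) + ε := by rw [hcol, mul_one]
  have hsumc : ∀ z, ∑ y, ((P^t0) z y - ε) = c := by
    intro z
    rw [Finset.sum_sub_distrib, ASC.pow_row_sum, Finset.sum_const, Finset.card_univ,
      nsmul_eq_mul, hcdef, hNdef]
  have hM2 : ∀ t, M (t0 + t) ≤ c * M t + ε := by
    intro t
    apply Finset.sup'_le
    intro z _
    rw [hdecomp t z]
    have h1 : ∑ y, ((P^t0) z y - ε) * (P^t) y l ≤ ∑ y, ((P^t0) z y - ε) * M t := by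
      apply Finset.sum_le_sum
      intro y _
      apply mul_le_mul_of_nonneg_left (hMz t y)
      have := hεle z y
      linarith
    have h2 : ∑ y, ((P^t0) z y - ε) * M t = c * M t := by
      rw [← Finset.sum_mul, hsumc z]
    linarith
  have hm2 : ∀ t, c * m t + ε ≤ m (t0 + t) := by
    intro t
    apply Finset.le_inf'
    intro z _
    rw [hdecomp t z]
    have h1 : ∑ y, ((P^t0) z y - ε) * m t ≤ ∑ y, ((P^t0) z y - ε) * (P^t) y l := by
      apply Finset.sum_le_sum
      intro y _
      apply mul_le_mul_of_nonneg_left (hmz t y)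
      have := hεle z y
      linarith
    have h2 : ∑ y, ((P^t0) z y - ε) * m t = c * m t := by
      rw [← Finset.sum_mul, hsumc z]
    linarith
  have hG : ∀ t, M (t0 + t) - m (t0 + t) ≤ c * (M t - m t) := by
    intro t
    have := hM2 t
    have := hm2 t
    have : c * (M t - m t) = c * M t - c * m t := by ring
    linarith [hM2 t, hm2 t]
  have hGk : ∀ k, M (t0*k) - m (t0*k) ≤ c^k * (M 0 - m 0) := by
    intro k
    induction k with
    | zero => simp
    | succ k ih =>
      have he : t0*(k+1) = t0 + t0*k := by ring
      rw [he, pow_succ]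
      calc M (t0 + t0*k) - m (t0 + t0*k) ≤ c * (M (t0*k) - m (t0*k)) := hG _
        _ ≤ c * (c^k * (M 0 - m 0)) := mul_le_mul_of_nonneg_left ih hc0
        _ = c^k * c * (M 0 - m 0) := by ring
  have hGmono : ∀ t, M t - m t ≤ M (t0*(t/t0)) - m (t0*(t/t0)) := by
    intro t
    have hle : t0*(t/t0) ≤ t := Nat.mul_div_le t t0
    have he : t = (t - t0*(t/t0)) + t0*(t/t0) := by omega
    have h1 : M t ≤ M (t0*(t/t0)) := by
      conv_lhs => rw [he]
      exact hMle _ _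
    have h2 : m (t0*(t/t0)) ≤ m t := by
      conv_rhs => rw [he]
      exact hmge _ _
    linarith
  have hunif : ∀ t, m t ≤ 1/(N:ℝ) ∧ 1/(N:ℝ) ≤ M t := by
    intro t
    have hcol : ∑ z, (P^t) z l = 1 := ASC.pow_col_sum t l
    have h1 : (N:ℝ) * m t ≤ 1 := by
      calc (N:ℝ) * m t = ∑ _z : {σ : Fin n ≃ V // IsLinextEnum r σ}, m t := by
            rw [Finset.sum_const, Finset.card_univ, nsmul_eq_mul]
        _ ≤ ∑ z, (P^t) z l := Finset.sum_le_sum (fun z _ => hmz t z)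
        _ = 1 := hcol
    have h2 : 1 ≤ (N:ℝ) * M t := by
      calc (1:ℝ) = ∑ z, (P^t) z l := hcol.symm
        _ ≤ ∑ _z : {σ : Fin n ≃ V // IsLinextEnum r σ}, M t :=
            Finset.sum_le_sum (fun z _ => hMz t z)
        _ = (N:ℝ) * M t := by rw [Finset.sum_const, Finset.card_univ, nsmul_eq_mul]
    constructor
    · rw [le_div_iff₀ hNR]; linarith
    · rw [div_le_iff₀ hNR]; linarith
  have hbound : ∀ t, |(P^t) x l - 1/(N:ℝ)| ≤ c^(t/t0) * (M 0 - m 0) := by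
    intro t
    have h1 := hMz t x
    have h2 := hmz t x
    have h3 := hunif t
    have h4 : M t - m t ≤ c^(t/t0) * (M 0 - m 0) := (hGmono t).trans (hGk (t/t0))
    rw [abs_le]
    constructor <;> [linarith [h3.2]; linarith [h3.1]]
  rw [tendsto_iff_dist_tendsto_zero]
  simp only [Real.dist_eq]
  apply squeeze_zero (fun t => abs_nonneg _) hbound
  have hlim : Tendsto (fun k : ℕ => c^k * (M 0 - m 0)) atTop (nhds 0) := by
    have h := (tendsto_pow_atTop_nhds_zero_of_lt_one hc0 hc1).mul_const (M 0 - m 0)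
    simpa using h
  exact hlim.comp (Nat.tendsto_div_const_atTop (by omega))
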